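/- arXiv:1404.0452 — 2 statements merged into one kernel-verified Lean document; each statement's English description precedes it below -/
import Mathlib

section
/- Let m ≥ 2 be even and let A be a real m-th order n-dimensional symmetric tensor. Then A is positive definite if and only if all of its H-eigenvalues are positive, i.e., A xᵐ > 0 for all nonzero x ∈ ℝⁿ if and only if every λ ∈ ℝ admitting a nonzero x ∈ ℝⁿ with A x^{m-1} = λ x^{[m-1]} satisfies λ > 0. -/
open Finset

variable {m n : ℕ}

/-- The homogeneous form `A xᵐ` of an `m`-th order `n`-dimensional tensor `A`. -/
noncomputable def tApply (A : (Fin m → Fin n) → ℝ) (x : Fin n → ℝ) : ℝ :=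
  ∑ f : Fin m → Fin n, A f * ∏ j, x (f j)

/-- A tensor is symmetric if its entries are invariant under any permutation of the indices. -/
def IsSymmT (A : (Fin m → Fin n) → ℝ) : Prop :=
  ∀ (σ : Equiv.Perm (Fin m)) (f : Fin m → Fin n), A (f ∘ σ) = A f

/-- The `i`-th component of the vector `A x^{m-1}`:
`Σ_{i₂,…,i_m} a_{i i₂ ⋯ i_m} x_{i₂} ⋯ x_{i_m}`. -/
noncomputable def tVec [NeZero m] (A : (Fin m → Fin n) → ℝ) (x : Fin n → ℝ) (i : Fin n) : ℝ :=
  ∑ f ∈ univ.filter (fun f : Fin m → Fin n => f 0 = i),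
    A f * ∏ j ∈ univ.erase (0 : Fin m), x (f j)

/-- The `i`-th component of the vector `A x^{m-1}` for complex `x`. -/
noncomputable def tVecC [NeZero m] (A : (Fin m → Fin n) → ℝ) (x : Fin n → ℂ) (i : Fin n) : ℂ :=
  ∑ f ∈ univ.filter (fun f : Fin m → Fin n => f 0 = i),
    (A f : ℂ) * ∏ j ∈ univ.erase (0 : Fin m), x (f j)

/-- The sum of the absolute values of the off-diagonal entries in the `i`-th row of `A`. -/
noncomputable def offDiagSum [NeZero m] (A : (Fin m → Fin n) → ℝ) (i : Fin n) : ℝ :=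
  ∑ f ∈ univ.filter (fun f : Fin m → Fin n => f 0 = i ∧ f ≠ (fun _ => i)), |A f|

/-- A diagonally dominated tensor. -/
def DiagDom [NeZero m] (A : (Fin m → Fin n) → ℝ) : Prop :=
  ∀ i : Fin n, offDiagSum A i ≤ A (fun _ => i)

/-- A strictly diagonally dominated tensor. -/
def StrictDiagDom [NeZero m] (A : (Fin m → Fin n) → ℝ) : Prop :=
  ∀ i : Fin n, offDiagSum A i < A (fun _ => i)

/-- The sum of all the entries in the `i`-th row of `A`. -/
noncomputable def rowSum [NeZero m] (A : (Fin m → Fin n) → ℝ) (i : Fin n) : ℝ :=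
  ∑ f ∈ univ.filter (fun f : Fin m → Fin n => f 0 = i), A f

/-- A B₀ tensor. -/
def IsB0 [NeZero m] (A : (Fin m → Fin n) → ℝ) : Prop :=
  ∀ i : Fin n, 0 ≤ rowSum A i ∧
    ∀ f : Fin m → Fin n, f 0 = i → f ≠ (fun _ => i) →
      A f ≤ (1 / (n : ℝ) ^ (m - 1)) * rowSum A i

/-- A B tensor. -/
def IsB [NeZero m] (A : (Fin m → Fin n) → ℝ) : Prop :=
  ∀ i : Fin n, 0 < rowSum A i ∧
    ∀ f : Fin m → Fin n, f 0 = i → f ≠ (fun _ => i) →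
      A f < (1 / (n : ℝ) ^ (m - 1)) * rowSum A i

/-- A Z tensor: all off-diagonal entries are non-positive. -/
def IsZ [NeZero m] (A : (Fin m → Fin n) → ℝ) : Prop :=
  ∀ (i : Fin n) (f : Fin m → Fin n), f 0 = i → f ≠ (fun _ => i) → A f ≤ 0

/-- The partially all one tensor `E^J`. -/
noncomputable def allOne (m : ℕ) {n : ℕ} (J : Finset (Fin n)) : (Fin m → Fin n) → ℝ :=
  fun f => if ∀ j, f j ∈ J then 1 else 0

/-- `Ĵ(B)`: the set of rows of `B` with at least one positive off-diagonal entry. -/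
noncomputable def hatJ [NeZero m] (B : (Fin m → Fin n) → ℝ) : Finset (Fin n) :=
  univ.filter fun i => ∃ f : Fin m → Fin n, f 0 = i ∧ f ≠ (fun _ => i) ∧ 0 < B f

lemma tApply_eq_sum_mul [NeZero m] (A : (Fin m → Fin n) → ℝ) (x : Fin n → ℝ) :
    tApply A x = ∑ i, x i * tVec A x i := by
  unfold tApply tVec
  rw [← Finset.sum_fiberwise_of_maps_to (g := fun f : Fin m → Fin n => f 0)
    (fun f _ => Finset.mem_univ (f 0)) (fun f => A f * ∏ j, x (f j))]
  refine Finset.sum_congr rfl fun i _ => ?_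
  rw [Finset.mul_sum]
  refine Finset.sum_congr rfl fun f hf => ?_
  simp only [Finset.mem_filter] at hf
  rw [← Finset.mul_prod_erase univ _ (Finset.mem_univ (0 : Fin m)), hf.2]
  ring

lemma tApply_smul (A : (Fin m → Fin n) → ℝ) (c : ℝ) (x : Fin n → ℝ) :
    tApply A (c • x) = c ^ m * tApply A x := by
  unfold tApply
  rw [Finset.mul_sum]
  refine Finset.sum_congr rfl fun f _ => ?_
  simp only [Pi.smul_apply, smul_eq_mul, Finset.prod_mul_distrib, Finset.prod_const,
    Finset.card_univ, Fintype.card_fin]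
  ring

lemma sum_pow_pos (hmeven : Even m) (hm0 : m ≠ 0) {x : Fin n → ℝ} (hx : x ≠ 0) :
    0 < ∑ i, x i ^ m := by
  obtain ⟨i, hi⟩ := Function.ne_iff.mp hx
  exact Finset.sum_pos' (fun j _ => hmeven.pow_nonneg _)
    ⟨i, Finset.mem_univ i, hmeven.pow_pos hi⟩

lemma row_eq [NeZero m] (A : (Fin m → Fin n) → ℝ) (hA : IsSymmT A) (x : Fin n → ℝ)
    (i : Fin n) (k : Fin m) :
    ∑ f ∈ univ.filter (fun f : Fin m → Fin n => f k = i),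
      A f * ∏ j ∈ univ.erase k, x (f j) = tVec A x i := by
  unfold tVec
  refine Finset.sum_nbij' (fun f => f ∘ Equiv.swap 0 k) (fun f => f ∘ Equiv.swap 0 k)
    ?_ ?_ ?_ ?_ ?_
  · intro f hf
    simp only [Finset.mem_filter, Finset.mem_univ, true_and] at hf ⊢
    simp [Function.comp, Equiv.swap_apply_left, hf]
  · intro f hf
    simp only [Finset.mem_filter, Finset.mem_univ, true_and] at hf ⊢
    simp [Function.comp, Equiv.swap_apply_right, hf]
  · intro f _
    ext j; simp [Function.comp]
  · intro f _
    ext j; simp [Function.comp]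
  · intro f hf
    rw [hA (Equiv.swap 0 k) f]
    congr 1
    refine Finset.prod_nbij' (fun j => Equiv.swap (0 : Fin m) k j)
      (fun j => Equiv.swap (0 : Fin m) k j) ?_ ?_ ?_ ?_ ?_
    · intro j hj
      simp only [Finset.mem_erase, Finset.mem_univ, and_true] at hj ⊢
      intro h
      apply hj
      have := (Equiv.swap (0:Fin m) k).injective (a₁ := j) (a₂ := k)
      rw [Equiv.swap_apply_right] at this
      exact this h
    · intro j hj
      simp only [Finset.mem_erase, Finset.mem_univ, and_true] at hj ⊢
      intro h
      apply hj
      have := (Equiv.swap (0:Fin m) k).injective (a₁ := j) (a₂ := 0)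
      rw [Equiv.swap_apply_left] at this
      exact this h
    · intro j _; simp
    · intro j _; simp
    · intro j _; simp [Function.comp]

noncomputable def tDer [NeZero m] (A : (Fin m → Fin n) → ℝ) (x : Fin n → ℝ) :
    (Fin n → ℝ) →L[ℝ] ℝ :=
  ∑ f : Fin m → Fin n, A f • ∑ k : Fin m,
    (∏ j ∈ univ.erase k, x (f j)) • (ContinuousLinearMap.proj (f k) : (Fin n → ℝ) →L[ℝ] ℝ)

lemma hasDeriv_tApply [NeZero m] (A : (Fin m → Fin n) → ℝ) (x : Fin n → ℝ) :
    HasStrictFDerivAt (tApply A) (tDer A x) x := by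
  unfold tApply tDer
  refine HasStrictFDerivAt.fun_sum fun f _ => ?_
  have h := HasStrictFDerivAt.finset_prod (u := (univ : Finset (Fin m)))
    (g := fun j (y : Fin n → ℝ) => y (f j))
    (g' := fun j => (ContinuousLinearMap.proj (f j) : (Fin n → ℝ) →L[ℝ] ℝ))
    (x := x) (fun j _ => hasStrictFDerivAt_apply (f j) x)
  exact h.const_mul (A f)

lemma tDer_apply [NeZero m] (A : (Fin m → Fin n) → ℝ) (hA : IsSymmT A) (x : Fin n → ℝ)
    (i : Fin n) : tDer A x (Pi.single i 1) = m * tVec A x i := by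
  unfold tDer
  rw [ContinuousLinearMap.sum_apply]
  simp only [ContinuousLinearMap.smul_apply, ContinuousLinearMap.sum_apply,
    ContinuousLinearMap.proj_apply, smul_eq_mul]
  have hs : ∀ f : Fin m → Fin n, ∀ k : Fin m, (Pi.single i 1 : Fin n → ℝ) (f k)
      = if f k = i then 1 else 0 := by
    intro f k
    rw [Pi.single_apply]
  calc ∑ f : Fin m → Fin n, A f * ∑ k : Fin m,
        (∏ j ∈ univ.erase k, x (f j)) * (Pi.single i 1 : Fin n → ℝ) (f k)
      = ∑ k : Fin m, ∑ f : Fin m → Fin n,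
        if f k = i then A f * ∏ j ∈ univ.erase k, x (f j) else 0 := by
        rw [Finset.sum_comm]
        refine Finset.sum_congr rfl fun f _ => ?_
        rw [Finset.mul_sum]
        refine Finset.sum_congr rfl fun k _ => ?_
        rw [hs f k]
        by_cases h : f k = i <;> simp [h]
    _ = ∑ k : Fin m, tVec A x i := by
        refine Finset.sum_congr rfl fun k _ => ?_
        rw [← Finset.sum_filter]
        exact row_eq A hA x i k
    _ = m * tVec A x i := by
        rw [Finset.sum_const, Finset.card_univ, Fintype.card_fin, nsmul_eq_mul]

noncomputable def gDer (m : ℕ) (x : Fin n → ℝ) : (Fin n → ℝ) →L[ℝ] ℝ :=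
  ∑ i : Fin n, ((m : ℝ) * x i ^ (m - 1)) • (ContinuousLinearMap.proj i : (Fin n → ℝ) →L[ℝ] ℝ)

lemma hasDeriv_g (x : Fin n → ℝ) :
    HasStrictFDerivAt (fun y : Fin n → ℝ => ∑ i, y i ^ m) (gDer m x) x := by
  unfold gDer
  refine HasStrictFDerivAt.fun_sum fun i _ => ?_
  exact (hasStrictDerivAt_pow m (x i)).comp_hasStrictFDerivAt x
    (hasStrictFDerivAt_apply i x)

lemma gDer_apply (x : Fin n → ℝ) (i : Fin n) :
    gDer m x (Pi.single i 1) = m * x i ^ (m - 1) := by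
  unfold gDer
  rw [ContinuousLinearMap.sum_apply]
  simp only [ContinuousLinearMap.smul_apply, ContinuousLinearMap.proj_apply, smul_eq_mul]
  rw [Finset.sum_eq_single i]
  · simp
  · intro j _ hj; simp [Pi.single_apply, Ne.symm hj]
  · simp

lemma g_smul (c : ℝ) (x : Fin n → ℝ) :
    ∑ i, (c • x) i ^ m = c ^ m * ∑ i, x i ^ m := by
  simp [mul_pow, Finset.mul_sum]

lemma tApply_of_eig [NeZero m] (hm0 : m ≠ 0) (A : (Fin m → Fin n) → ℝ) (x : Fin n → ℝ)
    (lam : ℝ) (heq : ∀ i : Fin n, tVec A x i = lam * x i ^ (m - 1)) :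
    tApply A x = lam * ∑ i, x i ^ m := by
  rw [tApply_eq_sum_mul, Finset.mul_sum]
  refine Finset.sum_congr rfl fun i _ => ?_
  rw [heq i]
  have hxp : x i ^ m = x i * x i ^ (m - 1) := by
    conv_lhs => rw [show m = 1 + (m - 1) by omega]
    rw [pow_add, pow_one]
  rw [hxp]; ring

/-- An even order real symmetric tensor is positive definite iff all of its
H-eigenvalues are positive. -/
theorem pd_iff_all_H_eigenvalues_pos
    {m n : ℕ} [NeZero m] (hm : 2 ≤ m) (hmeven : Even m) (hn : 1 ≤ n)
    (A : (Fin m → Fin n) → ℝ) (hA : IsSymmT A) :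
    (∀ x : Fin n → ℝ, x ≠ 0 → 0 < tApply A x) ↔
      ∀ (lam : ℝ) (x : Fin n → ℝ), x ≠ 0 →
        (∀ i : Fin n, tVec A x i = lam * x i ^ (m - 1)) → 0 < lam := by
  have hm0 : m ≠ 0 := NeZero.ne m
  have hm1 : m - 1 ≠ 0 := by omega
  constructor
  · intro hpd lam x hx heq
    have h1 := tApply_of_eig hm0 A x lam heq
    have h2 := sum_pow_pos hmeven hm0 hx
    have h3 := hpd x hx
    nlinarith
  · intro heig
    -- set up the compact constraint set
    set g : (Fin n → ℝ) → ℝ := fun y => ∑ i, y i ^ m with hgdef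
    have hgcont : Continuous g :=
      continuous_finset_sum _ fun i _ => (continuous_apply i).pow m
    have hφcont : Continuous (tApply A) := by
      unfold tApply
      exact continuous_finset_sum _ fun f _ =>
        continuous_const.mul (continuous_finset_prod _ fun j _ => continuous_apply (f j))
    set S : Set (Fin n → ℝ) := {y | g y = 1} with hSdef
    have hSne : S.Nonempty := by
      refine ⟨(Pi.single (⟨0, hn⟩ : Fin n) (1:ℝ)), ?_⟩
      simp only [hSdef, hgdef, Set.mem_setOf_eq]
      rw [Finset.sum_eq_single (⟨0, hn⟩ : Fin n)]
      · simp
      · intro j _ hj; rw [Pi.single_apply, if_neg hj, zero_pow hm0]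
      · simp
    have hSclosed : IsClosed S := isClosed_singleton.preimage hgcont
    have hSsub : S ⊆ Metric.closedBall 0 1 := by
      intro y hy
      rw [Metric.mem_closedBall, dist_zero_right, pi_norm_le_iff_of_nonneg zero_le_one]
      intro i
      rw [Real.norm_eq_abs]
      have h1 : |y i| ^ m ≤ 1 := by
        rw [hmeven.pow_abs]
        have h2 := Finset.single_le_sum (f := fun j => y j ^ m)
          (fun j _ => hmeven.pow_nonneg _) (Finset.mem_univ i)
        calc y i ^ m ≤ ∑ j, y j ^ m := h2
          _ = 1 := hy
      exact (pow_le_one_iff_of_nonneg (abs_nonneg _) hm0).mp h1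
    have hScompact : IsCompact S :=
      Metric.isCompact_of_isClosed_isBounded hSclosed (Metric.isBounded_closedBall.subset hSsub)
    obtain ⟨z, hzS, hzmin⟩ := hScompact.exists_isMinOn hSne hφcont.continuousOn
    have hgz : g z = 1 := hzS
    have hz0 : z ≠ 0 := by
      intro h
      rw [h] at hgz
      simp only [hgdef] at hgz
      rw [Finset.sum_eq_zero (fun i _ => by simp [zero_pow hm0])] at hgz
      exact zero_ne_one hgz
    have hextr : IsLocalExtrOn (tApply A) {y | g y = g z} z := by
      have hset : {y | g y = g z} = S := by rw [hgz]
      rw [hset]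
      exact (hzmin.filter_mono inf_le_right).isExtr
    obtain ⟨a, b, hab, hsum⟩ :=
      hextr.exists_multipliers_of_hasStrictFDerivAt_1d (hasDeriv_g z) (hasDeriv_tApply A z)
    have heval : ∀ i : Fin n,
        a * ((m : ℝ) * z i ^ (m - 1)) + b * tDer A z (Pi.single i 1) = 0 := by
      intro i
      have h := congrArg (fun L : (Fin n → ℝ) →L[ℝ] ℝ => L (Pi.single i 1)) hsum
      simpa [gDer_apply] using h
    have hmR : (m : ℝ) ≠ 0 := Nat.cast_ne_zero.mpr hm0
    have hb : b ≠ 0 := by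
      intro hb0
      have ha : a ≠ 0 := by
        intro ha0; exact hab (by simp [ha0, hb0, Prod.ext_iff])
      apply hz0
      funext i
      have h := heval i
      rw [hb0, zero_mul, add_zero, mul_eq_zero, mul_eq_zero] at h
      rcases h with h | h | h
      · exact absurd h ha
      · exact absurd h hmR
      · exact pow_eq_zero_iff hm1 |>.mp h
    set lam : ℝ := -a / b with hlamdef
    have heigz : ∀ i : Fin n, tVec A z i = lam * z i ^ (m - 1) := by
      intro i
      have h := heval i
      rw [tDer_apply A hA] at h
      have h' : a * z i ^ (m - 1) + b * tVec A z i = 0 :=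
        mul_left_cancel₀ hmR (by push_cast; ring_nf; ring_nf at h; linarith)
      rw [hlamdef]
      field_simp
      linarith
    have hlam : 0 < lam := heig lam z hz0 heigz
    have hφz : tApply A z = lam := by
      rw [tApply_of_eig hm0 A z lam heigz]
      have h1 : (∑ i, z i ^ m) = 1 := hgz
      rw [h1, mul_one]
    -- conclude positive definiteness
    intro x hx
    have ht : 0 < g x := sum_pow_pos hmeven hm0 hx
    set c : ℝ := (g x) ^ ((m : ℝ)⁻¹) with hcdef
    have hc : 0 < c := Real.rpow_pos_of_pos ht _
    have hcm : c ^ m = g x := by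
      rw [hcdef, ← Real.rpow_natCast ((g x) ^ ((m:ℝ)⁻¹)) m, ← Real.rpow_mul ht.le,
        inv_mul_cancel₀ hmR, Real.rpow_one]
    set y : Fin n → ℝ := c⁻¹ • x with hydef
    have hyS : y ∈ S := by
      simp only [hSdef, Set.mem_setOf_eq, hgdef]
      have := g_smul (m := m) c⁻¹ x
      rw [hydef, this, inv_pow, hcm, inv_mul_cancel₀ ht.ne']
    have hxy : x = c • y := by
      rw [hydef, smul_smul, mul_inv_cancel₀ hc.ne', one_smul]
    have hyge : lam ≤ tApply A y := hφz ▸ hzmin hyS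
    have hfin : tApply A x = c ^ m * tApply A y := by rw [hxy, tApply_smul]
    rw [hfin, hcm]
    have : 0 < tApply A y := lt_of_lt_of_le hlam hyge
    positivity
end

section
/- Let m ≥ 2 be even and let B be a real m-th order n-dimensional symmetric B tensor. Then B is positive definite: B xᵐ > 0 for all nonzero x ∈ ℝⁿ. -/
open Finset

variable {m n : ℕ}

section Aux

variable {m n : ℕ}

lemma tApply_sub (A E : (Fin m → Fin n) → ℝ) (c : ℝ) (x : Fin n → ℝ) :
    tApply (fun f => A f - c * E f) x = tApply A x - c * tApply E x := by
  simp [tApply, sub_mul, Finset.sum_sub_distrib, Finset.mul_sum, mul_assoc]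

lemma tApply_allOne (J : Finset (Fin n)) (x : Fin n → ℝ) :
    tApply (allOne m J) x = (∑ j ∈ J, x j) ^ m := by
  rw [Finset.sum_pow']
  have h : (Fintype.piFinset fun _ : Fin m => J) =
      univ.filter (fun f : Fin m → Fin n => ∀ j, f j ∈ J) := by
    ext f; simp [Fintype.mem_piFinset]
  rw [h, Finset.sum_filter, tApply]
  apply Finset.sum_congr rfl
  intro f _
  by_cases hf : ∀ j, f j ∈ J <;> simp [allOne, hf]

lemma const_iff (f : Fin m → Fin n) [NeZero m] :
    (f = fun _ => f 0) ↔ ∀ k l, f k = f l := by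
  constructor
  · intro h k l
    rw [h]
  · intro h
    funext k
    exact h k 0

lemma tApply_split [NeZero m] (A : (Fin m → Fin n) → ℝ) (x : Fin n → ℝ) :
    tApply A x = (∑ i : Fin n, A (fun _ => i) * x i ^ m) +
      ∑ f ∈ univ.filter (fun f : Fin m → Fin n => f ≠ fun _ => f 0),
        A f * ∏ j, x (f j) := by
  rw [tApply, ← Finset.sum_filter_add_sum_filter_not univ
    (fun f : Fin m → Fin n => f = fun _ => f 0)]
  congr 1
  refine Finset.sum_bij' (fun f _ => f 0) (fun i _ => fun _ => i) ?_ ?_ ?_ ?_ ?_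
  · intro f hf; exact Finset.mem_univ _
  · intro i _; simp
  · intro f hf
    simp only [Finset.mem_filter] at hf
    exact hf.2.symm
  · intro i _; rfl
  · intro f hf
    simp only [Finset.mem_filter] at hf
    have h2 : ∀ j, x (f j) = x (f 0) := fun j => by rw [congrFun hf.2 j]
    rw [Finset.prod_congr rfl (fun j _ => h2 j), Finset.prod_const]
    simp only [Finset.card_univ, Fintype.card_fin]
    rw [← hf.2]

end Aux
section Zcase

variable {m n : ℕ}

lemma prod_le_sum_pow (a : Fin m → ℝ) (ha : ∀ j, 0 ≤ a j) (hm : m ≠ 0) :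
    ∏ j, a j ≤ (∑ j, a j ^ m) / m := by
  have hm' : (m : ℝ) ≠ 0 := Nat.cast_ne_zero.mpr hm
  have key := Real.geom_mean_le_arith_mean_weighted (univ : Finset (Fin m))
    (fun _ => 1 / (m : ℝ)) (fun j => a j ^ m)
    (fun i _ => div_nonneg zero_le_one (Nat.cast_nonneg m))
    (by simp [Finset.sum_const]; field_simp)
    (fun j _ => pow_nonneg (ha j) m)
  have h1 : ∀ j : Fin m, ((a j ^ m : ℝ)) ^ ((1 : ℝ) / m) = a j := by
    intro j
    rw [← Real.rpow_natCast (a j) m, ← Real.rpow_mul (ha j)]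
    rw [mul_one_div, div_self hm', Real.rpow_one]
  calc ∏ j, a j = ∏ j, ((a j ^ m : ℝ)) ^ ((1 : ℝ) / m) := by
        exact (Finset.prod_congr rfl fun j _ => h1 j).symm
    _ ≤ ∑ j, (1 / (m : ℝ)) * a j ^ m := key
    _ = (∑ j, a j ^ m) / m := by rw [← Finset.mul_sum]; ring

lemma nonconst_comp [NeZero m] (f : Fin m → Fin n) (σ : Equiv.Perm (Fin m)) :
    ((f ∘ σ) ≠ fun _ => (f ∘ σ) 0) ↔ (f ≠ fun _ => f 0) := by
  rw [not_iff_not, const_iff, const_iff]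
  constructor
  · intro h k l
    have := h (σ.symm k) (σ.symm l)
    simpa using this
  · intro h k l
    exact h _ _

lemma sum_swap_reindex [NeZero m] (M : (Fin m → Fin n) → ℝ) (hsym : IsSymmT M)
    (y : Fin n → ℝ) (j : Fin m) :
    ∑ f ∈ univ.filter (fun f : Fin m → Fin n => f ≠ fun _ => f 0), |M f| * y (f j)
      = ∑ f ∈ univ.filter (fun f : Fin m → Fin n => f ≠ fun _ => f 0), |M f| * y (f 0) := by
  refine Finset.sum_bij' (fun f _ => f ∘ (Equiv.swap 0 j)) (fun f _ => f ∘ (Equiv.swap 0 j))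
    ?_ ?_ ?_ ?_ ?_
  · intro f hf
    simp only [Finset.mem_filter] at hf ⊢
    exact ⟨Finset.mem_univ _, (nonconst_comp f (Equiv.swap 0 j)).mpr hf.2⟩
  · intro f hf
    simp only [Finset.mem_filter] at hf ⊢
    exact ⟨Finset.mem_univ _, (nonconst_comp f (Equiv.swap 0 j)).mpr hf.2⟩
  · intro f _
    funext k
    simp [Function.comp, Equiv.swap_apply_self]
  · intro f _
    funext k
    simp [Function.comp, Equiv.swap_apply_self]
  · intro f _
    rw [hsym (Equiv.swap 0 j) f]
    simp [Function.comp, Equiv.swap_apply_left]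

lemma rowSum_split [NeZero m] (A : (Fin m → Fin n) → ℝ) (i : Fin n) :
    rowSum A i = A (fun _ => i) +
      ∑ f ∈ univ.filter (fun f : Fin m → Fin n => f 0 = i ∧ f ≠ fun _ => i), A f := by
  rw [rowSum]
  have h : univ.filter (fun f : Fin m → Fin n => f 0 = i) =
      insert (fun _ => i) (univ.filter (fun f : Fin m → Fin n => f 0 = i ∧ f ≠ fun _ => i)) := by
    ext f
    simp only [Finset.mem_filter, Finset.mem_insert, Finset.mem_univ, true_and]
    by_cases hf : f = fun _ => i
    · subst hf; simp
    · simp [hf]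
  rw [h, Finset.sum_insert (by simp)]

lemma offDiagSum_le_diag [NeZero m] (M : (Fin m → Fin n) → ℝ) (hB0 : 0 ≤ rowSum M i)
    (hZ : ∀ f : Fin m → Fin n, f 0 = i → f ≠ (fun _ => i) → M f ≤ 0) :
    offDiagSum M i ≤ M (fun _ => i) := by
  have h : offDiagSum M i =
      -∑ f ∈ univ.filter (fun f : Fin m → Fin n => f 0 = i ∧ f ≠ fun _ => i), M f := by
    rw [offDiagSum, ← Finset.sum_neg_distrib]
    apply Finset.sum_congr rfl
    intro f hf
    simp only [Finset.mem_filter] at hf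
    exact abs_of_nonpos (hZ f hf.2.1 hf.2.2)
  rw [h]
  have := rowSum_split M i
  linarith [hB0]

end Zcase
section PSDZ

variable {m n : ℕ}

lemma psd_of_Z [NeZero m] (hmeven : Even m) (M : (Fin m → Fin n) → ℝ)
    (hsym : IsSymmT M) (hrow : ∀ i, 0 ≤ rowSum M i)
    (hZ : ∀ f : Fin m → Fin n, f ≠ (fun _ => f 0) → M f ≤ 0) (x : Fin n → ℝ) :
    0 ≤ tApply M x := by
  have hm0 : m ≠ 0 := NeZero.ne m
  set N := univ.filter (fun f : Fin m → Fin n => f ≠ fun _ => f 0) with hN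
  set y : Fin n → ℝ := fun i => |x i| ^ m with hy
  have hynn : ∀ i, 0 ≤ y i := fun i => pow_nonneg (abs_nonneg _) m
  -- Step A+B: lower bound the nonconstant part
  have stepAB : ∀ f ∈ N, -( |M f| * ((∑ j, y (f j)) / m)) ≤ M f * ∏ j, x (f j) := by
    intro f _
    have h1 : |M f * ∏ j, x (f j)| = |M f| * ∏ j, |x (f j)| := by
      rw [abs_mul, Finset.abs_prod]
    have h2 : ∏ j, |x (f j)| ≤ (∑ j, y (f j)) / m := by
      have := prod_le_sum_pow (fun j => |x (f j)|) (fun j => abs_nonneg _) hm0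
      simpa [hy] using this
    have h3 : -( |M f| * ((∑ j, y (f j)) / m)) ≤ -|M f * ∏ j, x (f j)| := by
      rw [h1]
      exact neg_le_neg (mul_le_mul_of_nonneg_left h2 (abs_nonneg _))
    exact h3.trans (neg_abs_le _)
  have sumA : -(∑ f ∈ N, |M f| * ((∑ j, y (f j)) / m)) ≤ ∑ f ∈ N, M f * ∏ j, x (f j) := by
    rw [← Finset.sum_neg_distrib]
    exact Finset.sum_le_sum stepAB
  -- Step C+D: the bound equals ∑ f ∈ N, |M f| * y (f 0)
  have stepCD : ∑ f ∈ N, |M f| * ((∑ j, y (f j)) / m) = ∑ f ∈ N, |M f| * y (f 0) := by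
    have : ∀ f : Fin m → Fin n, |M f| * ((∑ j, y (f j)) / m)
        = (∑ j, |M f| * y (f j)) / m := by
      intro f
      rw [← Finset.mul_sum, mul_div_assoc]
    rw [Finset.sum_congr rfl (fun f _ => this f), ← Finset.sum_div, Finset.sum_comm]
    rw [Finset.sum_congr rfl (fun j _ => sum_swap_reindex M hsym y j)]
    rw [Finset.sum_const, Finset.card_univ, Fintype.card_fin, nsmul_eq_mul]
    field_simp
    rfl
  -- Step E: group by first index
  have stepE : ∑ f ∈ N, |M f| * y (f 0) = ∑ i : Fin n, offDiagSum M i * y i := by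
    rw [← Finset.sum_fiberwise_of_maps_to (g := fun f : Fin m → Fin n => f 0)
      (t := (univ : Finset (Fin n))) (fun f _ => Finset.mem_univ _)]
    apply Finset.sum_congr rfl
    intro i _
    have hset : N.filter (fun f : Fin m → Fin n => f 0 = i) =
        univ.filter (fun f : Fin m → Fin n => f 0 = i ∧ f ≠ fun _ => i) := by
      rw [hN, Finset.filter_filter]
      apply Finset.filter_congr
      intro f _
      constructor
      · rintro ⟨h1, h2⟩; exact ⟨h2, by rw [← h2]; exact h1⟩
      · rintro ⟨h1, h2⟩; exact ⟨by rw [h1]; exact h2, h1⟩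
    rw [hset, offDiagSum, Finset.sum_mul]
    apply Finset.sum_congr rfl
    intro f hf
    simp only [Finset.mem_filter] at hf
    rw [hf.2.1]
  -- Step F: conclude
  have diag_eq : ∀ i : Fin n, M (fun _ => i) * x i ^ m = M (fun _ => i) * y i := by
    intro i
    rw [hy]
    simp only [Even.pow_abs hmeven]
  have hdom : ∀ i : Fin n, offDiagSum M i ≤ M (fun _ => i) := by
    intro i
    exact offDiagSum_le_diag M (hrow i) (fun f h1 h2 => hZ f (by rw [h1]; exact h2))
  rw [tApply_split]
  have : ∑ i : Fin n, offDiagSum M i * y i ≤ ∑ i : Fin n, M (fun _ => i) * y i :=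
    Finset.sum_le_sum fun i _ => mul_le_mul_of_nonneg_right (hdom i) (hynn i)
  calc (0:ℝ) ≤ ∑ i : Fin n, M (fun _ => i) * y i - ∑ i : Fin n, offDiagSum M i * y i := by
        linarith
    _ ≤ _ := by
        rw [Finset.sum_congr rfl (fun i _ => diag_eq i)]
        have := sumA
        rw [stepCD, stepE] at this
        linarith

end PSDZ
section Decomp

variable {m n : ℕ}

lemma card_row [NeZero m] (i : Fin n) :
    (univ.filter (fun f : Fin m → Fin n => f 0 = i)).card = n ^ (m - 1) := by
  have h : univ.filter (fun f : Fin m → Fin n => f 0 = i) =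
      Fintype.piFinset (fun j : Fin m => if j = 0 then {i} else univ) := by
    ext f
    simp only [Finset.mem_filter, Finset.mem_univ, true_and, Fintype.mem_piFinset]
    constructor
    · intro hf j
      by_cases hj : j = 0 <;> simp [hj, hf]
    · intro hf
      have := hf 0
      simpa using this
  rw [h, Fintype.card_piFinset]
  have h2 : ∀ j : Fin m, (if j = 0 then ({i} : Finset (Fin n)) else univ).card
      = if j = 0 then 1 else n := by
    intro j; by_cases hj : j = 0 <;> simp [hj]
  rw [Finset.prod_congr rfl (fun j _ => h2 j)]
  rw [← Finset.prod_erase_mul _ _ (Finset.mem_univ (0 : Fin m))]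
  rw [if_pos rfl, mul_one]
  have h3 : ∀ j ∈ univ.erase (0 : Fin m), (if j = 0 then 1 else n) = n := by
    intro j hj; rw [if_neg (Finset.mem_erase.mp hj).1]
  rw [Finset.prod_congr rfl h3, Finset.prod_const, Finset.card_erase_of_mem (Finset.mem_univ _),
    Finset.card_univ, Fintype.card_fin]

lemma rowSum_sub_allOne [NeZero m] (B : (Fin m → Fin n) → ℝ) (h : ℝ) (J : Finset (Fin n))
    (i : Fin n) :
    rowSum (fun f => B f - h * allOne m J f) i = rowSum B i -
      h * ((univ.filter (fun f : Fin m → Fin n => f 0 = i ∧ ∀ j, f j ∈ J)).card : ℝ) := by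
  rw [rowSum, rowSum, Finset.sum_sub_distrib]
  congr 1
  rw [← Finset.mul_sum]
  congr 1
  simp only [allOne]
  rw [Finset.sum_boole, Finset.filter_filter]

lemma allOne_zero_of_notmem (J : Finset (Fin n)) (f : Fin m → Fin n) (j : Fin m)
    (hj : f j ∉ J) : allOne m J f = 0 := by
  rw [allOne, if_neg]
  intro hall
  exact hj (hall j)

lemma pos_entry_mem_hatJ [NeZero m] (B : (Fin m → Fin n) → ℝ) (hsym : IsSymmT B)
    (f : Fin m → Fin n) (hf : f ≠ fun _ => f 0) (hpos : 0 < B f) (j : Fin m) :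
    f j ∈ hatJ B := by
  set g : Fin m → Fin n := f ∘ (Equiv.swap 0 j) with hg
  have hg0 : g 0 = f j := by simp [hg, Equiv.swap_apply_left]
  have hgB : B g = B f := hsym (Equiv.swap 0 j) f
  have hgne : g ≠ fun _ => g 0 := (nonconst_comp f (Equiv.swap 0 j)).mpr hf
  rw [hatJ, Finset.mem_filter]
  refine ⟨Finset.mem_univ _, g, hg0, ?_, by rw [hgB]; exact hpos⟩
  rw [← hg0]
  exact hgne

end Decomp
section Main

variable {m n : ℕ}

lemma b0_psd [NeZero m] (hmeven : Even m) :
    ∀ (k : ℕ) (B : (Fin m → Fin n) → ℝ), (hatJ B).card ≤ k → IsSymmT B → IsB0 B →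
      ∀ x : Fin n → ℝ, 0 ≤ tApply B x := by
  intro k
  induction k with
  | zero =>
    intro B hcard hsym hB0 x
    have hJ : hatJ B = ∅ := Finset.card_eq_zero.mp (Nat.le_zero.mp hcard)
    apply psd_of_Z hmeven B hsym (fun i => (hB0 i).1)
    intro f hf
    by_contra hpos
    push_neg at hpos
    have hmem : f 0 ∈ hatJ B := by
      rw [hatJ, Finset.mem_filter]
      exact ⟨Finset.mem_univ _, f, rfl, hf, hpos⟩
    rw [hJ] at hmem
    exact absurd hmem (Finset.notMem_empty _)
  | succ k ih =>
    intro B hcard hsym hB0 x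
    by_cases hJe : hatJ B = ∅
    · exact ih B (by rw [hJe]; simp) hsym hB0 x
    classical
    set J := hatJ B with hJdef
    have hJne : J.Nonempty := Finset.nonempty_iff_ne_empty.mpr hJe
    set S : Fin n → Finset (Fin m → Fin n) :=
      fun i => univ.filter (fun f : Fin m → Fin n => f 0 = i ∧ f ≠ fun _ => i) with hS
    have rowne : ∀ i ∈ J, (S i).Nonempty := by
      intro i hi
      rw [hJdef, hatJ, Finset.mem_filter] at hi
      obtain ⟨-, f, h1, h2, h3⟩ := hi
      exact ⟨f, by rw [hS]; simp [h1, h2]⟩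
    set d : Fin n → ℝ := fun i =>
      if hi : (S i).Nonempty then (S i).sup' hi B else 0 with hd
    set h : ℝ := J.inf' hJne d with hh
    -- d is positive on J and bounded by the row-sum bound
    have hd_pos : ∀ i ∈ J, 0 < d i := by
      intro i hi
      have hi' := hi
      rw [hJdef, hatJ, Finset.mem_filter] at hi'
      obtain ⟨-, f, h1, h2, h3⟩ := hi'
      have hfS : f ∈ S i := by rw [hS]; simp [h1, h2]
      calc (0:ℝ) < B f := h3
        _ ≤ d i := by rw [hd]; simp only [dif_pos (rowne i hi)]; exact Finset.le_sup' B hfS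
    have hd_le : ∀ i ∈ J, d i ≤ (1 / (n:ℝ) ^ (m-1)) * rowSum B i := by
      intro i hi
      rw [hd]
      simp only [dif_pos (rowne i hi)]
      apply Finset.sup'_le
      intro f hf
      rw [hS] at hf
      simp only [Finset.mem_filter] at hf
      exact (hB0 i).2 f hf.2.1 hf.2.2
    have hh_pos : 0 < h := by
      rw [hh, Finset.lt_inf'_iff]
      exact fun i hi => hd_pos i hi
    have hh_le : ∀ i ∈ J, h ≤ d i := fun i hi => Finset.inf'_le d hi
    obtain ⟨i₀, hi₀J, hi₀⟩ := Finset.exists_mem_eq_inf' hJne d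
    have hn0 : 0 < n := by
      rcases hJne with ⟨i, -⟩
      exact i.pos
    have hnpow : (0:ℝ) < (n:ℝ) ^ (m-1) := by positivity
    set B' : (Fin m → Fin n) → ℝ := fun f => B f - h * allOne m J f with hB'def
    -- key: off-diagonal entries with an index outside J are nonpositive
    have keyZ : ∀ f : Fin m → Fin n, f ≠ (fun _ => f 0) → (¬ ∀ j, f j ∈ J) → B f ≤ 0 := by
      intro f hfne hfout
      by_contra hpos
      push_neg at hpos
      exact hfout (fun j => by rw [hJdef]; exact pos_entry_mem_hatJ B hsym f hfne hpos j)
    -- symmetry of B'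
    have hsym' : IsSymmT B' := by
      intro σ f
      rw [hB'def]
      simp only []
      rw [hsym σ f]
      congr 2
      rw [allOne, allOne]
      congr 1
      simp only [eq_iff_iff]
      constructor
      · intro hj j
        have := hj (σ.symm j)
        simpa using this
      · intro hj j
        exact hj _
    -- row sums of B'
    set cJ : Fin n → ℝ := fun i =>
      ((univ.filter (fun f : Fin m → Fin n => f 0 = i ∧ ∀ j, f j ∈ J)).card : ℝ) with hcJ
    have hrow' : ∀ i, rowSum B' i = rowSum B i - h * cJ i := fun i =>
      rowSum_sub_allOne B h J i
    have hcJ_zero : ∀ i, i ∉ J → cJ i = 0 := by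
      intro i hi
      rw [hcJ]
      simp only [Nat.cast_eq_zero, Finset.card_eq_zero]
      rw [Finset.filter_eq_empty_iff]
      rintro f - ⟨h1, h2⟩
      exact hi (h1 ▸ h2 0)
    have hcJ_le : ∀ i, cJ i ≤ (n:ℝ) ^ (m-1) := by
      intro i
      rw [hcJ]
      have hsub : (univ.filter (fun f : Fin m → Fin n => f 0 = i ∧ ∀ j, f j ∈ J))
          ⊆ univ.filter (fun f : Fin m → Fin n => f 0 = i) := by
        intro f hf
        simp only [Finset.mem_filter] at hf ⊢
        exact ⟨hf.1, hf.2.1⟩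
      have hc := Finset.card_le_card hsub
      rw [card_row i] at hc
      simp only [hcJ]
      exact_mod_cast hc
    -- lower bound for row sums of B on J
    have hrowB : ∀ i ∈ J, (n:ℝ) ^ (m-1) * d i ≤ rowSum B i := by
      intro i hi
      have e : (n:ℝ)^(m-1) * ((1/(n:ℝ)^(m-1)) * rowSum B i) = rowSum B i := by
        field_simp
      have := mul_le_mul_of_nonneg_left (hd_le i hi) hnpow.le
      rw [e] at this
      exact this
    have hrow'_nonneg : ∀ i, 0 ≤ rowSum B' i := by
      intro i
      rw [hrow' i]
      by_cases hi : i ∈ J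
      · have h4 : 0 ≤ cJ i := Nat.cast_nonneg _
        have hmul : h * cJ i ≤ d i * (n:ℝ)^(m-1) :=
          mul_le_mul (hh_le i hi) (hcJ_le i) h4 ((hh_pos.trans_le (hh_le i hi)).le)
        have := hrowB i hi
        nlinarith []
      · rw [hcJ_zero i hi, mul_zero, sub_zero]
        exact (hB0 i).1
    -- B' is a B₀ tensor
    have hB0' : IsB0 B' := by
      intro i
      refine ⟨hrow'_nonneg i, ?_⟩
      intro f hf0 hfne
      have hfne' : f ≠ fun _ => f 0 := by rw [hf0]; exact hfne
      by_cases hi : i ∈ J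
      · by_cases hall : ∀ j, f j ∈ J
        · have hBf : B' f = B f - h := by
            simp only [hB'def]
            rw [allOne, if_pos hall, mul_one]
          rw [hBf, hrow' i, mul_sub]
          have h1 := (hB0 i).2 f hf0 hfne
          have hcn : 0 ≤ cJ i := Nat.cast_nonneg _
          have e2 : (1/(n:ℝ)^(m-1)) * (h * cJ i) ≤ h := by
            have e3 : (1/(n:ℝ)^(m-1)) * (h * cJ i) = h * (cJ i / (n:ℝ)^(m-1)) := by ring
            have e4 : cJ i / (n:ℝ)^(m-1) ≤ 1 := by
              rw [div_le_one hnpow]; exact hcJ_le i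
            rw [e3]
            calc h * (cJ i / (n:ℝ)^(m-1)) ≤ h * 1 :=
                  mul_le_mul_of_nonneg_left e4 hh_pos.le
              _ = h := mul_one h
          linarith
        · have hBf : B' f = B f := by
            simp only [hB'def]
            push_neg at hall
            obtain ⟨j, hj⟩ := hall
            rw [allOne_zero_of_notmem J f j hj, mul_zero, sub_zero]
          rw [hBf]
          have h1 : B f ≤ 0 := keyZ f hfne' hall
          have h2 : 0 ≤ (1/(n:ℝ)^(m-1)) * rowSum B' i :=
            mul_nonneg (by positivity) (hrow'_nonneg i)
          linarith
      · have hBf : B' f = B f := by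
          simp only [hB'def]
          rw [allOne_zero_of_notmem J f 0 (by rw [hf0]; exact hi), mul_zero, sub_zero]
        rw [hBf, hrow' i, hcJ_zero i hi, mul_zero, sub_zero]
        exact (hB0 i).2 f hf0 hfne
    -- hatJ B' is strictly smaller
    have hhd : h = d i₀ := by rw [hh, hi₀]
    have hsubJ : hatJ B' ⊆ J.erase i₀ := by
      intro i hi
      rw [hatJ, Finset.mem_filter] at hi
      obtain ⟨-, f, hf0, hfne, hfpos⟩ := hi
      have hfne' : f ≠ fun _ => f 0 := by rw [hf0]; exact hfne
      have halt : allOne m J f = 0 ∨ allOne m J f = 1 := by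
        rw [allOne]; by_cases hall : ∀ j, f j ∈ J <;> simp [hall]
      have hBpos : 0 < B f := by
        simp only [hB'def] at hfpos
        rcases halt with h0 | h1
        · rw [h0, mul_zero, sub_zero] at hfpos; exact hfpos
        · rw [h1, mul_one] at hfpos; linarith
      have hiJ : i ∈ J := by
        rw [hJdef, ← hf0]
        exact pos_entry_mem_hatJ B hsym f hfne' hBpos 0
      rw [Finset.mem_erase]
      refine ⟨?_, hiJ⟩
      rintro rfl
      by_cases hall : ∀ j, f j ∈ J
      · have hBf : B' f = B f - h := by
          simp only [hB'def]
          rw [allOne, if_pos hall, mul_one]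
        have hfS : f ∈ S i := by rw [hS]; simp only [Finset.mem_filter]; exact ⟨Finset.mem_univ _, hf0, hfne⟩
        have hle : B f ≤ d i := by
          rw [hd]
          simp only [dif_pos (rowne i hi₀J)]
          exact Finset.le_sup' B hfS
        have : 0 < B' f := hfpos
        rw [hBf] at this
        rw [hhd] at this
        linarith
      · have h1 : B f ≤ 0 := keyZ f hfne' hall
        linarith
    have hcard' : (hatJ B').card ≤ k := by
      have h1 := Finset.card_le_card hsubJ
      rw [Finset.card_erase_of_mem hi₀J] at h1
      have h2 : 1 ≤ J.card := Finset.card_pos.mpr hJne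
      omega
    -- conclude
    have e1 : tApply B' x = tApply B x - h * (∑ j ∈ J, x j) ^ m := by
      rw [hB'def, tApply_sub, tApply_allOne]
    have hih := ih B' hcard' hsym' hB0' x
    have h2 : 0 ≤ (∑ j ∈ J, x j) ^ m := hmeven.pow_nonneg _
    nlinarith [mul_nonneg hh_pos.le h2]

end Main
section Final

variable {m n : ℕ}

/-- The identity tensor: 1 on the diagonal, 0 elsewhere. -/
noncomputable def idT (m n : ℕ) [NeZero m] : (Fin m → Fin n) → ℝ :=
  fun f => if f = (fun _ => f 0) then 1 else 0

lemma idT_symm [NeZero m] : IsSymmT (idT m n) := by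
  intro σ f
  rw [idT]
  congr 1
  simp only [eq_iff_iff]
  exact not_iff_not.mp (nonconst_comp f σ)

lemma tApply_idT [NeZero m] (x : Fin n → ℝ) :
    tApply (idT m n) x = ∑ i : Fin n, x i ^ m := by
  rw [tApply_split]
  have h1 : ∀ i : Fin n, idT m n (fun _ => i) = 1 := by
    intro i; rw [idT, if_pos rfl]
  have h2 : ∑ f ∈ univ.filter (fun f : Fin m → Fin n => f ≠ fun _ => f 0),
      idT m n f * ∏ j, x (f j) = 0 := by
    apply Finset.sum_eq_zero
    intro f hf
    simp only [Finset.mem_filter] at hf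
    rw [idT, if_neg hf.2, zero_mul]
  rw [h2, add_zero]
  exact Finset.sum_congr rfl fun i _ => by rw [h1 i, one_mul]

lemma rowSum_sub_idT [NeZero m] (B : (Fin m → Fin n) → ℝ) (ε : ℝ) (i : Fin n) :
    rowSum (fun f => B f - ε * idT m n f) i = rowSum B i - ε := by
  rw [rowSum, rowSum, Finset.sum_sub_distrib]
  congr 1
  rw [← Finset.mul_sum]
  have h : ∑ f ∈ univ.filter (fun f : Fin m → Fin n => f 0 = i), idT m n f = 1 := by
    rw [Finset.sum_eq_single (fun _ => i)]
    · rw [idT, if_pos rfl]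
    · intro f hf hne
      simp only [Finset.mem_filter] at hf
      rw [idT, if_neg]
      intro hc
      apply hne
      rw [hc, hf.2]
    · intro habs
      exact absurd (by simp : (fun _ => i : Fin m → Fin n) ∈ _) habs
  rw [h, mul_one]

theorem even_symmetric_b_tensor_pd'
    {m n : ℕ} [NeZero m] (hm : 2 ≤ m) (hmeven : Even m) (hn : 1 ≤ n)
    (B : (Fin m → Fin n) → ℝ) (hsym : IsSymmT B) (hB : IsB B) :
    ∀ x : Fin n → ℝ, x ≠ 0 → 0 < tApply B x := by
  intro x hx
  classical
  have hne : (univ : Finset (Fin n)).Nonempty := ⟨⟨0, hn⟩, Finset.mem_univ _⟩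
  have hnpow : (0:ℝ) < (n:ℝ) ^ (m-1) := by positivity
  set a : ℝ := (univ : Finset (Fin n)).inf' hne (rowSum B) with ha
  have ha_pos : 0 < a := by
    rw [ha, Finset.lt_inf'_iff]
    exact fun i _ => (hB i).1
  have ha_le : ∀ i : Fin n, a ≤ rowSum B i := fun i => Finset.inf'_le _ (Finset.mem_univ i)
  set T := univ.filter (fun f : Fin m → Fin n => f ≠ fun _ => f 0) with hT
  set g : (Fin m → Fin n) → ℝ := fun f => rowSum B (f 0) - (n:ℝ)^(m-1) * B f with hg
  have hg_pos : ∀ f ∈ T, 0 < g f := by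
    intro f hf
    simp only [hT, Finset.mem_filter] at hf
    have h1 := (hB (f 0)).2 f rfl hf.2
    rw [hg]
    have := mul_lt_mul_of_pos_left h1 hnpow
    have e : (n:ℝ)^(m-1) * ((1/(n:ℝ)^(m-1)) * rowSum B (f 0)) = rowSum B (f 0) := by
      field_simp
    rw [e] at this
    simp only []
    linarith
  set b : ℝ := if hTne : T.Nonempty then T.inf' hTne g else a with hb
  have hb_pos : 0 < b := by
    rw [hb]
    by_cases hTne : T.Nonempty
    · rw [dif_pos hTne, Finset.lt_inf'_iff]
      exact fun f hf => hg_pos f hf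
    · rw [dif_neg hTne]; exact ha_pos
  have hb_le : ∀ f ∈ T, b ≤ g f := by
    intro f hf
    rw [hb, dif_pos ⟨f, hf⟩]
    exact Finset.inf'_le _ hf
  set ε : ℝ := min a b with hε
  have hε_pos : 0 < ε := lt_min ha_pos hb_pos
  set B' : (Fin m → Fin n) → ℝ := fun f => B f - ε * idT m n f with hB'def
  have hsym' : IsSymmT B' := by
    intro σ f
    simp only [hB'def]
    rw [hsym σ f, idT_symm σ f]
  have hrow' : ∀ i, rowSum B' i = rowSum B i - ε := fun i => rowSum_sub_idT B ε i
  have hB0' : IsB0 B' := by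
    intro i
    have hri : 0 ≤ rowSum B' i := by
      rw [hrow' i]
      have := ha_le i
      have := min_le_left a b
      linarith
    refine ⟨hri, ?_⟩
    intro f hf0 hfne
    have hfne' : f ≠ fun _ => f 0 := by rw [hf0]; exact hfne
    have hfT : f ∈ T := by rw [hT]; simp only [Finset.mem_filter]; exact ⟨Finset.mem_univ _, hfne'⟩
    have h1 := hb_le f hfT
    rw [hg] at h1
    simp only [] at h1
    have h2 : ε ≤ b := min_le_right a b
    have hBf : B' f = B f := by
      simp only [hB'def]
      rw [idT, if_neg hfne', mul_zero, sub_zero]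
    rw [hBf, hrow' i, hf0] at *
    -- goal : B f ≤ 1/n^(m-1) * (rowSum B (f 0) - ε)
    rw [div_mul_eq_mul_div, one_mul, le_div_iff₀ hnpow]
    -- B f * n^(m-1) ≤ rowSum B (f 0) - ε
    nlinarith [h1, h2]
  have hcard : (hatJ B').card ≤ n := by
    calc (hatJ B').card ≤ (univ : Finset (Fin n)).card :=
          Finset.card_le_card (Finset.subset_univ _)
      _ = n := by rw [Finset.card_univ, Fintype.card_fin]
  have hpsd := b0_psd hmeven n B' hcard hsym' hB0' x
  have e1 : tApply B' x = tApply B x - ε * ∑ i : Fin n, x i ^ m := by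
    rw [hB'def, tApply_sub, tApply_idT]
  have hsum_pos : 0 < ∑ i : Fin n, x i ^ m := by
    obtain ⟨i, hi⟩ : ∃ i, x i ≠ 0 := by
      by_contra hc
      push_neg at hc
      exact hx (funext hc)
    apply Finset.sum_pos' (fun j _ => hmeven.pow_nonneg _)
    exact ⟨i, Finset.mem_univ i, hmeven.pow_pos hi⟩
  nlinarith [mul_pos hε_pos hsum_pos]

end Final

/-- an even order symmetric B tensor is positive definite. -/
theorem even_symmetric_b_tensor_pd
    {m n : ℕ} [NeZero m] (hm : 2 ≤ m) (hmeven : Even m) (hn : 1 ≤ n)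
    (B : (Fin m → Fin n) → ℝ) (hsym : IsSymmT B) (hB : IsB B) :
    ∀ x : Fin n → ℝ, x ≠ 0 → 0 < tApply B x := by
  exact even_symmetric_b_tensor_pd' hm hmeven hn B hsym hB
end
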